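/- The flow of the vector field X⁶ is explicit: let p = (p₁, p₂, p₃) ∈ ℂ³ with p₂ ≠ 1, and set D(t) := (1 + p₂) + (1 − p₂)e^{2t}. Define γ by γ(t) = ( 2p₁e^t / D(t), ((1 + p₂) − (1 − p₂)e^{2t}) / D(t), p₃ − p₁²/(1 − p₂) + 2p₁²/((1 − p₂)·D(t)) ). Then γ(0) = p, and at every t ∈ ℝ with D(t) ≠ 0 the curve γ is differentiable with γ′(t) = X⁶(γ(t)). -/

import Mathlib

open Complex

noncomputable section

/-- The holomorphic vector field `X⁶ = (z₁ z₂, z₂² − 1, −z₁²)` on `ℂ³`. -/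
def X6 : ℂ × ℂ × ℂ → ℂ × ℂ × ℂ := fun p => (p.1 * p.2.1, p.2.1 ^ 2 - 1, -p.1 ^ 2)

/-- The explicit flow of `X⁶`: for `p ∈ ℂ³` with `p₂ ≠ 1`, setting
`D(t) = (1 + p₂) + (1 − p₂)e^{2t}`, the curve
`γ(t) = (2p₁eᵗ/D(t), ((1 + p₂) − (1 − p₂)e^{2t})/D(t), p₃ − p₁²/(1 − p₂) + 2p₁²/((1 − p₂)D(t)))`
starts at `p` and is an integral curve of `X⁶` wherever `D(t) ≠ 0`. -/
theorem X6_flow (p : ℂ × ℂ × ℂ) (hp : p.2.1 ≠ 1) (D : ℝ → ℂ)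
    (hD : D = fun t : ℝ => (1 + p.2.1) + (1 - p.2.1) * (Real.exp (2 * t) : ℂ))
    (γ : ℝ → ℂ × ℂ × ℂ)
    (hγ : γ = fun t : ℝ =>
      (2 * p.1 * (Real.exp t : ℂ) / D t,
        ((1 + p.2.1) - (1 - p.2.1) * (Real.exp (2 * t) : ℂ)) / D t,
        p.2.2 - p.1 ^ 2 / (1 - p.2.1) + 2 * p.1 ^ 2 / ((1 - p.2.1) * D t))) :
    γ 0 = p ∧ ∀ t : ℝ, D t ≠ 0 → HasDerivAt γ (X6 (γ t)) t := by
  have hb : (1 : ℂ) - p.2.1 ≠ 0 := sub_ne_zero_of_ne (Ne.symm hp)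
  subst hD hγ
  constructor
  · have h0 : ((Real.exp (2 * 0) : ℝ) : ℂ) = 1 := by norm_num
    have h0' : ((Real.exp 0 : ℝ) : ℂ) = 1 := by norm_num
    simp only [h0, h0', mul_one]
    have h2 : (1 : ℂ) + p.2.1 + (1 - p.2.1) = 2 := by ring
    rw [h2]
    refine Prod.ext ?_ (Prod.ext ?_ ?_)
    · simp only; field_simp
    · simp only; field_simp; ring
    · simp only; field_simp; ring
  · intro t hDt
    simp only at hDt
    have hE : HasDerivAt (fun t : ℝ => ((Real.exp t : ℝ) : ℂ)) (Real.exp t) t :=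
      (Real.hasDerivAt_exp t).ofReal_comp
    have hE2 : HasDerivAt (fun t : ℝ => ((Real.exp (2 * t) : ℝ) : ℂ))
        ((2 : ℂ) * Real.exp (2 * t)) t := by
      have h := (((Real.hasDerivAt_exp (2 * t)).comp t
        ((hasDerivAt_id t).const_mul 2))).ofReal_comp
      simp only [Function.comp, id_eq, mul_one] at h
      convert h using 1
      push_cast
      ring
    have hD' : HasDerivAt (fun t : ℝ => (1 + p.2.1) + (1 - p.2.1) * ((Real.exp (2 * t) : ℝ) : ℂ))
        ((1 - p.2.1) * ((2 : ℂ) * Real.exp (2 * t))) t :=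
      (hE2.const_mul _).const_add _
    have hN2 : HasDerivAt (fun t : ℝ => (1 + p.2.1) - (1 - p.2.1) * ((Real.exp (2 * t) : ℝ) : ℂ))
        (-((1 - p.2.1) * ((2 : ℂ) * Real.exp (2 * t)))) t :=
      ((hE2.const_mul _).const_sub _)
    have h1 := ((hE.const_mul (2 * p.1)).div hD' hDt)
    have h2 := (hN2.div hD' hDt)
    have hbD : (1 - p.2.1) * ((1 + p.2.1) + (1 - p.2.1) * ((Real.exp (2 * t) : ℝ) : ℂ)) ≠ 0 :=
      mul_ne_zero hb hDt
    have h3 := ((hasDerivAt_const t (2 * p.1 ^ 2)).div (hD'.const_mul (1 - p.2.1)) hbD).const_add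
        (p.2.2 - p.1 ^ 2 / (1 - p.2.1))
    have hder := HasDerivAt.prodMk h1 (HasDerivAt.prodMk h2 h3)
    convert hder using 1
    · funext x; rfl
    simp only [X6, Prod.mk.injEq]
    refine ⟨?_, ?_, ?_⟩
    · field_simp
      ring
    · rw [div_pow, div_sub' (pow_ne_zero 2 hDt), div_eq_div_iff (pow_ne_zero 2 hDt) (pow_ne_zero 2 hDt)]
      ring
    · have hEE : ((Real.exp (2 * t) : ℝ) : ℂ) = ((Real.exp t : ℝ) : ℂ) ^ 2 := by
        rw [two_mul, Real.exp_add]; push_cast; ring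
      rw [div_pow, ← neg_div, div_eq_div_iff
        (pow_ne_zero 2 hDt) (pow_ne_zero 2 (mul_ne_zero hb hDt)), hEE]
      ring
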